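/- Fix an integer $n \geq 2$. Then there exist constants $C > 0$ and $x_0 > 1$ such that for all real $x \geq x_0$, $\left| \sum_{p=1}^{\lfloor x \rfloor} \binom{p-1}{n-2} \sum_{q=1}^{\lfloor x/p \rfloor} \binom{q+n-2}{n-1} - \left(\frac{1}{n!}\sum_{p=1}^{\lfloor x \rfloor} p^{-n}\binom{p-1}{n-2}\right) x^{n} \right| \leq C\, x^{n-1} \ln x$. -/

import Mathlib

lemma my_pow_sub_pow_le (a b : ℝ) (h0 : 0 ≤ b) (hab : b ≤ a) :
    ∀ k : ℕ, a ^ (k + 1) - b ^ (k + 1) ≤ (k + 1) * (a - b) * a ^ k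
  | 0 => by norm_num
  | (k + 1) => by
    have ih := my_pow_sub_pow_le a b h0 hab k
    have ha : 0 ≤ a := h0.trans hab
    have h1 : b ^ (k + 1) ≤ a ^ (k + 1) := pow_le_pow_left₀ h0 hab _
    have e2 : a * (a ^ (k + 1) - b ^ (k + 1)) ≤ a * ((k + 1) * (a - b) * a ^ k) :=
      mul_le_mul_of_nonneg_left ih ha
    have e3 : (a - b) * b ^ (k + 1) ≤ (a - b) * a ^ (k + 1) :=
      mul_le_mul_of_nonneg_left h1 (by linarith)
    calc a ^ (k + 2) - b ^ (k + 2)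
        = a * (a ^ (k + 1) - b ^ (k + 1)) + (a - b) * b ^ (k + 1) := by ring
      _ ≤ a * ((k + 1) * (a - b) * a ^ k) + (a - b) * a ^ (k + 1) := by linarith
      _ = (↑(k + 1) + 1) * (a - b) * a ^ (k + 1) := by push_cast; ring

lemma my_l2 (t : ℝ) (ht : 1 ≤ t) (k : ℕ) :
    t ^ (k + 2) - (t - 1) ^ (k + 2) ≤ ((k : ℝ) + 2) * t ^ (k + 1) := by
  calc t ^ (k + 2) - (t - 1) ^ (k + 2)
      ≤ (↑(k + 1) + 1) * (t - (t - 1)) * t ^ (k + 1) :=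
        my_pow_sub_pow_le t (t - 1) (by linarith) (by linarith) (k + 1)
    _ = ((k : ℝ) + 2) * t ^ (k + 1) := by push_cast; ring

lemma my_u2 (t c : ℝ) (ht : 0 ≤ t) (hc : 0 ≤ c) (k : ℕ) :
    (t + c) ^ (k + 2) - t ^ (k + 2) ≤ ((k : ℝ) + 2) * c * (t + c) ^ (k + 1) := by
  calc (t + c) ^ (k + 2) - t ^ (k + 2)
      ≤ (↑(k + 1) + 1) * ((t + c) - t) * (t + c) ^ (k + 1) :=
        my_pow_sub_pow_le (t + c) t ht (by linarith) (k + 1)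
    _ = ((k : ℝ) + 2) * c * (t + c) ^ (k + 1) := by push_cast; ring

lemma my_hockey (k : ℕ) : ∀ m : ℕ, ∑ q ∈ Finset.Icc 1 m, (q + k).choose (k + 1)
    = (m + k + 1).choose (k + 2)
  | 0 => by simp [Nat.choose_eq_zero_of_lt]
  | (m + 1) => by
    rw [Finset.sum_Icc_succ_top (Nat.succ_le_succ (Nat.zero_le m)), my_hockey k m,
      show m + 1 + k = m + k + 1 by omega,
      Nat.choose_succ_succ (m + k + 1) (k + 1), add_comm]

lemma my_key (k m : ℕ) (t : ℝ) (hm1 : 1 ≤ m) (hmt : (m : ℝ) ≤ t) (htm : t < m + 1) :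
    |(((m + k + 1).choose (k + 2) : ℝ)) - t ^ (k + 2) / (Nat.factorial (k + 2))|
      ≤ ((k + 2 : ℝ) ^ 2 * (k + 3) ^ (k + 1)) * t ^ (k + 1) := by
  have ht : (1 : ℝ) ≤ t := le_trans (by exact_mod_cast hm1) hmt
  have ht0 : 0 ≤ t := by linarith
  have hid : m.ascFactorial (k + 2) = (k + 2).factorial * (m + k + 1).choose (k + 2) := by
    have := Nat.ascFactorial_eq_factorial_mul_choose' m (k + 2)
    rwa [show m + (k + 2) - 1 = m + k + 1 by omega] at this
  have hlow : m ^ (k + 2) ≤ m.ascFactorial (k + 2) := Nat.pow_succ_le_ascFactorial m _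
  have hup : m.ascFactorial (k + 2) ≤ (m + k + 1) ^ (k + 2) := by
    have := Nat.ascFactorial_le_pow_add (m - 1) (k + 2)
    rwa [show m - 1 + 1 = m by omega, show m - 1 + (k + 2) = m + k + 1 by omega] at this
  have hAc : (m.ascFactorial (k + 2) : ℝ)
      = (Nat.factorial (k + 2) : ℝ) * ((m + k + 1).choose (k + 2) : ℝ) := by
    rw [hid]; push_cast; ring
  have hAlow : ((m : ℝ)) ^ (k + 2) ≤ (m.ascFactorial (k + 2) : ℝ) := by exact_mod_cast hlow
  have hAup : (m.ascFactorial (k + 2) : ℝ) ≤ ((m : ℝ) + k + 1) ^ (k + 2) := by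
    exact_mod_cast hup
  have htpos : (0 : ℝ) ≤ t ^ (k + 1) := by positivity
  have h1 : (1 : ℝ) ≤ (k + 3 : ℝ) ^ (k + 1) := one_le_pow₀ (by linarith)
  have hkle : ((k : ℝ) + 2) ≤ (k + 2 : ℝ) ^ 2 * (k + 3) ^ (k + 1) := by nlinarith
  have hK : |(m.ascFactorial (k + 2) : ℝ) - t ^ (k + 2)|
      ≤ ((k + 2 : ℝ) ^ 2 * (k + 3) ^ (k + 1)) * t ^ (k + 1) := by
    have hb1 : (0 : ℝ) ≤ t - 1 := by linarith
    have l1 : (t - 1) ^ (k + 2) ≤ (m.ascFactorial (k + 2) : ℝ) :=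
      le_trans (pow_le_pow_left₀ hb1 (by linarith) _) hAlow
    have l2 := my_l2 t ht k
    have u1 : (m.ascFactorial (k + 2) : ℝ) ≤ (t + ((k : ℝ) + 2)) ^ (k + 2) :=
      le_trans hAup (pow_le_pow_left₀ (by positivity) (by push_cast; linarith) _)
    have u2 := my_u2 t ((k : ℝ) + 2) ht0 (by positivity) k
    have u3 : (t + ((k : ℝ) + 2)) ^ (k + 1) ≤ ((k + 3 : ℝ)) ^ (k + 1) * t ^ (k + 1) := by
      calc (t + ((k : ℝ) + 2)) ^ (k + 1) ≤ (((k : ℝ) + 3) * t) ^ (k + 1) := by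
            apply pow_le_pow_left₀ (by positivity)
            nlinarith
        _ = ((k + 3 : ℝ)) ^ (k + 1) * t ^ (k + 1) := by rw [mul_pow]
    rw [abs_le]
    constructor
    · have h5 : ((k : ℝ) + 2) * t ^ (k + 1)
          ≤ (k + 2 : ℝ) ^ 2 * (k + 3) ^ (k + 1) * t ^ (k + 1) :=
        mul_le_mul_of_nonneg_right hkle htpos
      linarith
    · have u4 : ((k : ℝ) + 2) * ((k : ℝ) + 2) * (t + ((k : ℝ) + 2)) ^ (k + 1)
          ≤ (k + 2 : ℝ) ^ 2 * (k + 3) ^ (k + 1) * t ^ (k + 1) := by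
        calc ((k : ℝ) + 2) * ((k : ℝ) + 2) * (t + ((k : ℝ) + 2)) ^ (k + 1)
            ≤ ((k : ℝ) + 2) * ((k : ℝ) + 2) * (((k + 3 : ℝ)) ^ (k + 1) * t ^ (k + 1)) :=
              mul_le_mul_of_nonneg_left u3 (by positivity)
          _ = (k + 2 : ℝ) ^ 2 * (k + 3) ^ (k + 1) * t ^ (k + 1) := by ring
      nlinarith [u1, u2, u4]
  have hfac : (1 : ℝ) ≤ (Nat.factorial (k + 2) : ℝ) := by
    exact_mod_cast Nat.one_le_iff_ne_zero.mpr (Nat.factorial_ne_zero _)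
  have hfac0 : (0 : ℝ) < (Nat.factorial (k + 2) : ℝ) := by linarith
  have heq : ((m + k + 1).choose (k + 2) : ℝ) - t ^ (k + 2) / (Nat.factorial (k + 2))
      = ((m.ascFactorial (k + 2) : ℝ) - t ^ (k + 2)) / (Nat.factorial (k + 2)) := by
    rw [hAc]; field_simp
  rw [heq, abs_div, abs_of_pos hfac0]
  calc |(m.ascFactorial (k + 2) : ℝ) - t ^ (k + 2)| / (Nat.factorial (k + 2) : ℝ)
      ≤ |(m.ascFactorial (k + 2) : ℝ) - t ^ (k + 2)| / 1 :=
        div_le_div_of_nonneg_left (abs_nonneg _) one_pos hfac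
    _ = |(m.ascFactorial (k + 2) : ℝ) - t ^ (k + 2)| := by rw [div_one]
    _ ≤ _ := hK

/-- For `n ≥ 2`:
`∑_{p=1}^{⌊x⌋} C(p-1,n-2) ∑_{q=1}^{⌊x/p⌋} C(q+n-2,n-1)
  = ((1/n!) ∑_{p=1}^{⌊x⌋} p^{-n} C(p-1,n-2)) x^n + O(x^{n-1} log x)`. -/
theorem f1_sum_asymptotic (n : ℕ) (hn : 2 ≤ n) :
    ∃ C : ℝ, 0 < C ∧ ∃ x₀ : ℝ, 1 < x₀ ∧ ∀ x : ℝ, x₀ ≤ x →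
      |(∑ p ∈ Finset.Icc 1 ⌊x⌋₊, ((p - 1).choose (n - 2) : ℝ) *
            ∑ q ∈ Finset.Icc 1 ⌊x / (p : ℝ)⌋₊, ((q + n - 2).choose (n - 1) : ℝ)) -
          (1 / (Nat.factorial n : ℝ) *
            ∑ p ∈ Finset.Icc 1 ⌊x⌋₊, ((p - 1).choose (n - 2) : ℝ) / (p : ℝ) ^ n) * x ^ n| ≤
        C * x ^ (n - 1) * Real.log x := by
  obtain ⟨k, rfl⟩ : ∃ k, n = k + 2 := ⟨n - 2, by omega⟩
  set K : ℝ := (k + 2 : ℝ) ^ 2 * (k + 3) ^ (k + 1) with hKdef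
  have hKpos : 0 < K := by positivity
  have he1 : (1 : ℝ) < Real.exp 1 := by
    have := Real.exp_one_gt_d9; linarith
  refine ⟨2 * K, by positivity, Real.exp 1, he1, fun x hx => ?_⟩
  have hx1 : (1 : ℝ) ≤ x := le_trans he1.le hx
  have hx0 : (0 : ℝ) < x := by linarith
  have hlog : (1 : ℝ) ≤ Real.log x := (Real.le_log_iff_exp_le hx0).mpr hx
  simp only [show k + 2 - 2 = k from rfl, show k + 2 - 1 = k + 1 from rfl,
    show ∀ q : ℕ, q + (k + 2) - 2 = q + k from fun q => rfl]
  set N := ⌊x⌋₊ with hN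
  have hN1 : 1 ≤ N := Nat.le_floor (by exact_mod_cast hx1)
  have hNx : (N : ℝ) ≤ x := Nat.floor_le hx0.le
  set S := Finset.Icc 1 N with hS
  -- rewrite the main term
  have hmain : (1 / (Nat.factorial (k + 2) : ℝ) *
        ∑ p ∈ S, ((p - 1).choose k : ℝ) / (p : ℝ) ^ (k + 2)) * x ^ (k + 2)
      = ∑ p ∈ S, ((p - 1).choose k : ℝ) *
          ((x / (p : ℝ)) ^ (k + 2) / (Nat.factorial (k + 2) : ℝ)) := by
    rw [Finset.mul_sum, Finset.sum_mul]
    refine Finset.sum_congr rfl fun p hp => ?_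
    have hp1 : 1 ≤ p := (Finset.mem_Icc.mp hp).1
    have hp0 : ((p : ℝ)) ≠ 0 := by positivity
    rw [div_pow]; ring
  rw [hmain, ← Finset.sum_sub_distrib]
  have hterm : ∀ p ∈ S, |((p - 1).choose k : ℝ) *
        (∑ q ∈ Finset.Icc 1 ⌊x / (p : ℝ)⌋₊, ((q + k).choose (k + 1) : ℝ)) -
        ((p - 1).choose k : ℝ) * ((x / (p : ℝ)) ^ (k + 2) / (Nat.factorial (k + 2) : ℝ))|
      ≤ K * x ^ (k + 1) * (1 / (p : ℝ)) := by
    intro p hp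
    obtain ⟨hp1, hpN⟩ := Finset.mem_Icc.mp hp
    have hpr : (1 : ℝ) ≤ (p : ℝ) := by exact_mod_cast hp1
    have hpx : (p : ℝ) ≤ x := le_trans (by exact_mod_cast hpN) hNx
    have hp0 : (0 : ℝ) < (p : ℝ) := by linarith
    set t : ℝ := x / (p : ℝ) with hT
    have ht1 : (1 : ℝ) ≤ t := (one_le_div hp0).mpr hpx
    set m := ⌊t⌋₊ with hm
    have hm1 : 1 ≤ m := Nat.le_floor (by exact_mod_cast ht1)
    have hmt : (m : ℝ) ≤ t := Nat.floor_le (by linarith)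
    have htm : t < m + 1 := Nat.lt_floor_add_one t
    have hcast : (∑ q ∈ Finset.Icc 1 m, ((q + k).choose (k + 1) : ℝ))
        = ((m + k + 1).choose (k + 2) : ℝ) := by
      exact_mod_cast congrArg (Nat.cast : ℕ → ℝ) (my_hockey k m)
    have hkey := my_key k m t hm1 hmt htm
    have hcple : ((p - 1).choose k : ℝ) ≤ (p : ℝ) ^ k := by
      have : (p - 1).choose k ≤ p ^ k :=
        le_trans (Nat.choose_le_pow _ _) (Nat.pow_le_pow_left (Nat.sub_le p 1) k)
      exact_mod_cast this
    rw [← mul_sub, abs_mul, abs_of_nonneg (by positivity : (0:ℝ) ≤ ((p - 1).choose k : ℝ)),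
      hcast]
    calc ((p - 1).choose k : ℝ) *
          |((m + k + 1).choose (k + 2) : ℝ) - t ^ (k + 2) / (Nat.factorial (k + 2) : ℝ)|
        ≤ (p : ℝ) ^ k * (K * t ^ (k + 1)) :=
          mul_le_mul hcple hkey (abs_nonneg _) (by positivity)
      _ = K * x ^ (k + 1) * (1 / (p : ℝ)) := by
          rw [hT, div_pow]
          field_simp
          ring
  have hharm : ∑ p ∈ S, (1 / (p : ℝ)) ≤ 1 + Real.log x := by
    have h1 : ∑ p ∈ S, (1 / (p : ℝ)) = ((harmonic N : ℚ) : ℝ) := by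
      rw [harmonic_eq_sum_Icc]
      push_cast
      simp [one_div, hS]
    rw [h1]
    calc ((harmonic N : ℚ) : ℝ) ≤ 1 + Real.log N := harmonic_le_one_add_log N
      _ ≤ 1 + Real.log x := by
          have hN0 : (0 : ℝ) < (N : ℝ) := by exact_mod_cast hN1
          have := Real.log_le_log hN0 hNx
          linarith
  calc |∑ p ∈ S, (((p - 1).choose k : ℝ) *
          (∑ q ∈ Finset.Icc 1 ⌊x / (p : ℝ)⌋₊, ((q + k).choose (k + 1) : ℝ)) -
          ((p - 1).choose k : ℝ) * ((x / (p : ℝ)) ^ (k + 2) / (Nat.factorial (k + 2) : ℝ)))|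
      ≤ ∑ p ∈ S, |((p - 1).choose k : ℝ) *
          (∑ q ∈ Finset.Icc 1 ⌊x / (p : ℝ)⌋₊, ((q + k).choose (k + 1) : ℝ)) -
          ((p - 1).choose k : ℝ) * ((x / (p : ℝ)) ^ (k + 2) / (Nat.factorial (k + 2) : ℝ))| :=
        Finset.abs_sum_le_sum_abs _ _
    _ ≤ ∑ p ∈ S, K * x ^ (k + 1) * (1 / (p : ℝ)) := Finset.sum_le_sum hterm
    _ = K * x ^ (k + 1) * ∑ p ∈ S, (1 / (p : ℝ)) := by rw [← Finset.mul_sum]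
    _ ≤ K * x ^ (k + 1) * (2 * Real.log x) := by
        apply mul_le_mul_of_nonneg_left (by linarith) (by positivity)
    _ = 2 * K * x ^ (k + 1) * Real.log x := by ring
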